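/- For all t ∈ ℝ, the nedian family satisfies Φ_N(t) = Φ_S(σ(t)) ∘ Φ_A(τ(t)) up to a nonzero scalar factor, where τ(t) = (1−t)/(1−2t) and σ(t) = (1−2t)²/(1−t+t²) (for t ≠ 1/2; both sides interpreted as homogeneous triples). -/

import Mathlib

/-- Cyclic convolution of two triples of reals. -/
def cconv (x y : ℝ × ℝ × ℝ) : ℝ × ℝ × ℝ :=
  (x.1 * y.1 + x.2.1 * y.2.2 + x.2.2 * y.2.1,
   x.1 * y.2.1 + x.2.1 * y.1 + x.2.2 * y.2.2,
   x.1 * y.2.2 + x.2.1 * y.2.1 + x.2.2 * y.1)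

/-- The scaling family. -/
def ΦS (σ : ℝ) : ℝ × ℝ × ℝ := (1 + 2 * σ, 1 - σ, 1 - σ)

/-- The aliquot family. -/
def ΦA (τ : ℝ) : ℝ × ℝ × ℝ := (0, 1 - τ, τ)

/-- The nedian family. -/
def ΦN (s : ℝ) : ℝ × ℝ × ℝ := ((1 - s) * s, s ^ 2, (1 - s) ^ 2)

theorem nedian_decomposition (t : ℝ) (ht : t ≠ 1 / 2) :
    ∃ lam : ℝ, lam ≠ 0 ∧
      ΦN t = lam • cconv (ΦS ((1 - 2 * t) ^ 2 / (1 - t + t ^ 2)))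
                         (ΦA ((1 - t) / (1 - 2 * t))) := by
  have hD : (1 - t + t ^ 2) > 0 := by nlinarith [sq_nonneg (t - 1/2)]
  have hD' : (1 - t + t ^ 2) ≠ 0 := ne_of_gt hD
  have hk : (1 - 2 * t) ≠ 0 := by
    intro h; apply ht; linarith
  refine ⟨(1 - t + t ^ 2) / 3, by positivity, ?_⟩
  simp only [ΦN, ΦS, ΦA, cconv, Prod.smul_def, smul_eq_mul, Prod.mk.injEq]
  refine ⟨?_, ?_, ?_⟩ <;> field_simp [show (1:ℝ) - t * 2 ≠ 0 by rwa [mul_comm]] <;> ring
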